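/- For the involution ι(ν∨, β) = (s_β(ν∨), −t_{ν∨}(β)) on the set P of pairs (ν∨, β) with ν∨ in the W-orbit of an antidominant coweight μ∨, β a positive real affine root, and t_{ν∨} s_β covered by t_{ν∨} in the affine Bruhat order: ι is a well-defined involution of P, and t_{ν∨} s_β = t_{s_β(ν∨)} s_{−t_{ν∨}(β)}. -/
import Mathlib


/-- For the map `ι(ν∨, β) = (s_β(ν∨), −t_{ν∨}(β))` on the set `P` of
pairs `(ν∨, β)` with `ν∨` in the `W`-orbit of an antidominant coweight, `β` a positive
real affine root, and `t_{ν∨} s_β ⋖ t_{ν∨}` in the affine Bruhat order: `ι` is a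
well-defined involution of `P`, and `t_{ν∨} s_β = t_{s_β(ν∨)} s_{−t_{ν∨}(β)}`.
Affine real roots are pairs `(γ, k) = γ + kε`; `t_{ν∨}(γ + kε) = γ + (k − ⟨γ,ν∨⟩)ε`
and `s_β(ν∨) = ν∨ − ⟨γ_β, ν∨⟩ γ_β∨`. -/
theorem stmt18 {M N : Type*} [AddCommGroup M] [AddCommGroup N]
    {G : Type*} [Group G]
    -- finite roots, and positivity for affine real roots
    (Rfin : Set M) (hRneg : ∀ γ ∈ Rfin, -γ ∈ Rfin)
    (pos : Set (M × ℤ))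
    -- the pairing ⟨γ, ν∨⟩ and the coroots
    (pair : M →+ N →+ ℤ) (coroot : M → N)
    (hpair2 : ∀ γ ∈ Rfin, pair γ (coroot γ) = 2)
    (hcorootneg : ∀ γ ∈ Rfin, coroot (-γ) = -coroot γ)
    -- translations and reflections in the extended affine Weyl group G
    (t : N → G) (ht : ∀ a b : N, t (a + b) = t a * t b)
    (s : M × ℤ → G)
    -- the actions of translations on affine roots, and of reflections on coweights
    (tAct : N → M × ℤ → M × ℤ)
    (htAct : ∀ (ν : N) (γ : M) (k : ℤ), tAct ν (γ, k) = (γ, k - pair γ ν))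
    (sAct : M × ℤ → N → N)
    (hsAct : ∀ β ν, sAct β ν = ν - pair β.1 ν • coroot β.1)
    -- group relations
    (hconj1 : ∀ ν β, t ν * s β * (t ν)⁻¹ = s (tAct ν β))
    (hconj2 : ∀ β ν, s β * t ν * (s β)⁻¹ = t (sAct β ν))
    (hsneg : ∀ β, s (-β) = s β)
    -- length, Bruhat order and covering relations
    (len : G → ℕ) (le : G → G → Prop) (cover : G → G → Prop)
    (hcover : ∀ x y, cover x y ↔ (le x y ∧ len x + 1 = len y))
    (hrefl : ∀ x β, len (x * s β) < len x → le (x * s β) x)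
    (hlenorbit : ∀ ν β, len (t (sAct β ν)) = len (t ν))
    -- Björner–Brenti: if t_ν s_β ⋖ t_ν then t_ν(β) < 0
    (hBB : ∀ ν β, β ∈ pos → cover (t ν * s β) (t ν) →
      -(tAct ν β) ∈ pos ∧ tAct ν β ∉ pos)
    -- the W-orbit of the antidominant coweight μ∨
    (Orb : Set N) (hOrb : ∀ ν ∈ Orb, ∀ β, sAct β ν ∈ Orb)
    -- the set P
    (P : Set (N × (M × ℤ)))
    (hP : P = {p | p.1 ∈ Orb ∧ p.2 ∈ pos ∧ p.2.1 ∈ Rfin ∧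
      cover (t p.1 * s p.2) (t p.1)})
    (ι : N × (M × ℤ) → N × (M × ℤ))
    (hι : ∀ p, ι p = (sAct p.2 p.1, -(tAct p.1 p.2))) :
    (∀ p ∈ P, t p.1 * s p.2 = t (sAct p.2 p.1) * s (-(tAct p.1 p.2)))
    ∧ (∀ p ∈ P, ι p ∈ P)
    ∧ (∀ p ∈ P, ι (ι p) = p) := by
  subst hP
  have key : ∀ (ν : N) (β : M × ℤ),
      t ν * s β = t (sAct β ν) * s (-(tAct ν β)) := by
    intro ν β
    have hfin : (tAct ν β).1 = β.1 := by
      obtain ⟨γ, k⟩ := β; rw [htAct]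
    have hs : sAct (tAct ν β) ν = sAct β ν := by
      rw [hsAct, hsAct, hfin]
    rw [hsneg]
    have h1 : t ν * s β = s (tAct ν β) * t ν := by
      have := hconj1 ν β
      rw [← this]; group
    rw [h1, ← hs, ← hconj2 (tAct ν β) ν]; group
  refine ⟨fun p _ => key p.1 p.2, ?_, ?_⟩
  · rintro ⟨ν, γ, k⟩ ⟨hOrbν, hposβ, hRγ, hcov⟩
    dsimp only at hOrbν hposβ hRγ hcov ⊢
    rw [hι]
    have hBBres := hBB ν (γ, k) hposβ hcov
    refine ⟨hOrb ν hOrbν _, hBBres.1, ?_, ?_⟩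
    · show (-(tAct ν (γ, k))).1 ∈ Rfin
      rw [htAct]; exact hRneg γ hRγ
    · have hlen := (hcover _ _).mp hcov
      have hleneq : len (t (sAct (γ,k) ν)) = len (t ν) := hlenorbit ν (γ,k)
      have heq : t (sAct (γ,k) ν) * s (-(tAct ν (γ,k))) = t ν * s (γ,k) :=
        (key ν (γ,k)).symm
      rw [hcover]
      refine ⟨?_, ?_⟩
      · apply hrefl
        rw [heq, hleneq]; omega
      · rw [heq, hleneq]; omega
  · rintro ⟨ν, γ, k⟩ ⟨hOrbν, hposβ, hRγ, hcov⟩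
    have hp2 := hpair2 γ hRγ
    have hcn := hcorootneg γ hRγ
    rw [hι, hι]
    simp only [htAct, Prod.neg_mk, hsAct, map_neg, map_sub, map_zsmul, hp2,
      AddMonoidHom.neg_apply, AddMonoidHom.sub_apply, hcn, smul_eq_mul, neg_neg,
      Prod.mk.injEq]
    constructor
    · module
    · constructor
      · trivial
      · ring
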